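/- Let T be a finite set of n time series, x ∈ T, and k ≤ n an integer with k ≥ 1. Let B be a regularized band with B ≠ T and |B| ≤ k − √n, and let B′ be the adjacent regularized band (the smallest regularized band strictly containing B). Let r = min { Score₁(O) : O ⊆ T, x ∈ O, |O| = k } be the optimal confidence-band area for size k. Then Score₁(B′) ≤ (1 + √n) · r. -/

import Mathlib

open Finset
open scoped Classical

/-- The envelope-area score of a finite set `U` of time series over a finite domain `D`:
`Score₁(U) = ∑_{i ∈ D} (max_{t ∈ U} t(i) − min_{t ∈ U} t(i))`. -/
noncomputable def score1 {D : Type*} [Fintype D] (U : Finset (D → ℝ)) : ℝ :=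
  ∑ i : D, (sSup ((fun f => f i) '' (U : Set (D → ℝ))) -
            sInf ((fun f => f i) '' (U : Set (D → ℝ))))

/-- The regularized score `Reg(U;α) = Score₁(U) − α|U|`. -/
noncomputable def reg {D : Type*} [Fintype D] (α : ℝ) (U : Finset (D → ℝ)) : ℝ :=
  score1 U - α * U.card

/-- `U` is the regularized band of `T` (with seed `x ∈ U`) for the parameter `α`:
it minimizes `Reg(·;α) = Score₁(·) − α|·|` over all subsets of `T` containing `x`,
and has maximum cardinality among such minimizers (ties broken towards larger sets). -/
def IsRegBand {D : Type*} [Fintype D] (T : Finset (D → ℝ)) (x : D → ℝ) (α : ℝ)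
    (U : Finset (D → ℝ)) : Prop :=
  U ⊆ T ∧ x ∈ U ∧
  (∀ V ⊆ T, x ∈ V → reg α U ≤ reg α V) ∧
  (∀ V ⊆ T, x ∈ V → reg α V = reg α U → V.card ≤ U.card)

lemma score1_nonneg {D : Type*} [Fintype D] {U : Finset (D → ℝ)} (hU : U.Nonempty) :
    0 ≤ score1 U := by
  apply Finset.sum_nonneg
  intro i _
  have hne : ((fun f => f i) '' (U : Set (D → ℝ))).Nonempty :=
    (hU.to_set).image _
  have hfin : ((fun f => f i) '' (U : Set (D → ℝ))).Finite := (U.finite_toSet).image _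
  have := csInf_le_csSup hne hfin.bddBelow hfin.bddAbove
  linarith

lemma score1_mono {D : Type*} [Fintype D] {U V : Finset (D → ℝ)} (hU : U.Nonempty)
    (hUV : U ⊆ V) : score1 U ≤ score1 V := by
  apply Finset.sum_le_sum
  intro i _
  have hne : ((fun f => f i) '' (U : Set (D → ℝ))).Nonempty := (hU.to_set).image _
  have hfinV : ((fun f => f i) '' (V : Set (D → ℝ))).Finite := (V.finite_toSet).image _
  have hsub : ((fun f => f i) '' (U : Set (D → ℝ))) ⊆ ((fun f => f i) '' (V : Set (D → ℝ))) :=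
    Set.image_mono (by exact_mod_cast hUV)
  have h1 := csSup_le_csSup hfinV.bddAbove hne hsub
  have h2 := csInf_le_csInf hfinV.bddBelow hne hsub
  linarith

lemma score1_submodular {D : Type*} [Fintype D] {U V : Finset (D → ℝ)}
    (hUV : (U ∩ V).Nonempty) :
    score1 (U ∩ V) + score1 (U ∪ V) ≤ score1 U + score1 V := by
  have hU : U.Nonempty := hUV.mono (inter_subset_left)
  have hV : V.Nonempty := hUV.mono (inter_subset_right)
  rw [score1, score1, score1, score1, ← Finset.sum_add_distrib, ← Finset.sum_add_distrib]
  apply Finset.sum_le_sum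
  intro i _
  set g : (D → ℝ) → ℝ := fun f => f i with hg
  have hfU : (g '' (U : Set (D → ℝ))).Finite := (U.finite_toSet).image _
  have hfV : (g '' (V : Set (D → ℝ))).Finite := (V.finite_toSet).image _
  have hnU : (g '' (U : Set (D → ℝ))).Nonempty := hU.to_set.image _
  have hnV : (g '' (V : Set (D → ℝ))).Nonempty := hV.to_set.image _
  have hnI : (g '' ((U ∩ V : Finset (D → ℝ)) : Set (D → ℝ))).Nonempty := hUV.to_set.image _
  have hIU : (g '' ((U ∩ V : Finset (D → ℝ)) : Set (D → ℝ))) ⊆ g '' (U : Set (D → ℝ)) :=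
    Set.image_mono (by exact_mod_cast (inter_subset_left : U ∩ V ⊆ U))
  have hIV : (g '' ((U ∩ V : Finset (D → ℝ)) : Set (D → ℝ))) ⊆ g '' (V : Set (D → ℝ)) :=
    Set.image_mono (by exact_mod_cast (inter_subset_right : U ∩ V ⊆ V))
  have hJ : (g '' ((U ∪ V : Finset (D → ℝ)) : Set (D → ℝ))) =
      g '' (U : Set (D → ℝ)) ∪ g '' (V : Set (D → ℝ)) := by
    rw [Finset.coe_union, Set.image_union]
  have h1 := csSup_le_csSup hfU.bddAbove hnI hIU
  have h2 := csSup_le_csSup hfV.bddAbove hnI hIV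
  have h3 := csInf_le_csInf hfU.bddBelow hnI hIU
  have h4 := csInf_le_csInf hfV.bddBelow hnI hIV
  have h5 : sSup (g '' ((U ∪ V : Finset (D → ℝ)) : Set (D → ℝ))) =
      sSup (g '' (U : Set (D → ℝ))) ⊔ sSup (g '' (V : Set (D → ℝ))) := by
    rw [hJ]; exact csSup_union hfU.bddAbove hnU hfV.bddAbove hnV
  have h6 : sInf (g '' ((U ∪ V : Finset (D → ℝ)) : Set (D → ℝ))) =
      sInf (g '' (U : Set (D → ℝ))) ⊓ sInf (g '' (V : Set (D → ℝ))) := by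
    rw [hJ]; exact csInf_union hfU.bddBelow hnU hfV.bddBelow hnV
  rw [h5, h6]
  have hp := le_min h1 h2
  have hq := max_le h3 h4
  have e1 := min_add_max (sSup (g '' (U : Set (D → ℝ)))) (sSup (g '' (V : Set (D → ℝ))))
  have e2 := min_add_max (sInf (g '' (U : Set (D → ℝ)))) (sInf (g '' (V : Set (D → ℝ))))
  rcases max_cases (sSup (g '' (U : Set (D → ℝ)))) (sSup (g '' (V : Set (D → ℝ)))) with ⟨hm1,-⟩|⟨hm1,-⟩ <;>
  rcases min_cases (sInf (g '' (U : Set (D → ℝ)))) (sInf (g '' (V : Set (D → ℝ)))) with ⟨hm2,-⟩|⟨hm2,-⟩ <;>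
  rw [hm1, hm2] <;> linarith

/-- Chain property: a band for a smaller parameter is contained in a band for a larger one. -/
lemma band_chain {D : Type*} [Fintype D] {T : Finset (D → ℝ)} {x : D → ℝ} {α β : ℝ}
    {U W : Finset (D → ℝ)} (hαβ : α < β)
    (hU : IsRegBand T x α U) (hW : IsRegBand T x β W) : U ⊆ W := by
  obtain ⟨hUT, hxU, hUmin, -⟩ := hU
  obtain ⟨hWT, hxW, hWmin, -⟩ := hW
  have hI : (U ∩ W).Nonempty := ⟨x, Finset.mem_inter.mpr ⟨hxU, hxW⟩⟩
  have h1 : reg α U ≤ reg α (U ∩ W) :=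
    hUmin _ ((inter_subset_left).trans hUT) (Finset.mem_inter.mpr ⟨hxU, hxW⟩)
  have h2 : reg β W ≤ reg β (U ∪ W) :=
    hWmin _ (Finset.union_subset hUT hWT) (Finset.mem_union.mpr (Or.inl hxU))
  have h3 := score1_submodular hI
  have hcard : (U ∩ W).card + (U ∪ W).card = U.card + W.card :=
    Finset.card_inter_add_card_union U W
  have hcard' : ((U ∩ W).card : ℝ) + ((U ∪ W).card : ℝ) = (U.card : ℝ) + (W.card : ℝ) := by
    exact_mod_cast hcard
  simp only [reg] at h1 h2
  have hj : β * (((U ∩ W).card : ℝ) + ((U ∪ W).card : ℝ)) = β * ((U.card : ℝ) + (W.card : ℝ)) := by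
    rw [hcard']
  have key : (β - α) * ((U.card : ℝ) - ((U ∩ W).card : ℝ)) ≤ 0 := by nlinarith [hj, h1, h2, h3]
  have hle : (U.card : ℝ) ≤ ((U ∩ W).card : ℝ) := by nlinarith [key, sub_pos.mpr hαβ]
  have hle' : U.card ≤ (U ∩ W).card := by exact_mod_cast hle
  have heq := Finset.eq_of_subset_of_card_le (inter_subset_left : U ∩ W ⊆ U) hle'
  intro a ha
  rw [← heq] at ha
  exact (Finset.mem_inter.mp ha).2

/-- For every `α`, a regularized band exists. -/
lemma band_exists {D : Type*} [Fintype D] (T : Finset (D → ℝ)) (x : D → ℝ) (hx : x ∈ T)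
    (α : ℝ) : ∃ W, IsRegBand T x α W := by
  classical
  set F : Finset (Finset (D → ℝ)) := T.powerset.filter (fun V => x ∈ V) with hF
  have hmemF : ∀ V, V ∈ F ↔ V ⊆ T ∧ x ∈ V := by
    intro V; simp [hF, Finset.mem_filter, Finset.mem_powerset]
  have hFne : F.Nonempty := ⟨T, (hmemF T).mpr ⟨le_refl T, hx⟩⟩
  obtain ⟨U₀, hU₀F, hU₀min⟩ := F.exists_min_image (reg α) hFne
  set F' : Finset (Finset (D → ℝ)) := F.filter (fun V => reg α V = reg α U₀) with hF'
  have hF'ne : F'.Nonempty := ⟨U₀, by simp [hF', hU₀F]⟩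
  obtain ⟨W, hWF', hWmax⟩ := F'.exists_max_image (fun V => V.card) hF'ne
  have hWF : W ∈ F ∧ reg α W = reg α U₀ := by
    simpa [hF', Finset.mem_filter] using hWF'
  refine ⟨W, ((hmemF W).mp hWF.1).1, ((hmemF W).mp hWF.1).2, ?_, ?_⟩
  · intro V hVT hxV
    rw [hWF.2]
    exact hU₀min V ((hmemF V).mpr ⟨hVT, hxV⟩)
  · intro V hVT hxV hreg
    exact hWmax V (Finset.mem_filter.mpr ⟨(hmemF V).mpr ⟨hVT, hxV⟩, hreg.trans hWF.2⟩)


/-- Let `T` be a set of `n` time series with seed `x ∈ T` and let `1 ≤ k ≤ n`. Let `B` be a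
regularized band with `B ≠ T` and `|B| ≤ k − √n`, and let `B'` be the adjacent regularized
band (the smallest regularized band strictly containing `B`). If `r` is the optimal
confidence-band area `min { Score₁(O) : O ⊆ T, x ∈ O, |O| = k }`,
then `Score₁(B') ≤ (1 + √n)·r`. -/
theorem findsum_case_small_band {D : Type*} [Fintype D] [Nonempty D]
    (T : Finset (D → ℝ)) (x : D → ℝ) (hx : x ∈ T)
    (k : ℕ) (hk1 : 1 ≤ k) (hkn : k ≤ T.card)
    (B B' : Finset (D → ℝ))
    (hB : ∃ α : ℝ, 0 < α ∧ IsRegBand T x α B) (hBT : B ≠ T)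
    (hBk : (B.card : ℝ) ≤ (k : ℝ) - Real.sqrt (T.card : ℝ))
    (hB' : ∃ α : ℝ, 0 < α ∧ IsRegBand T x α B') (hBB' : B ⊂ B')
    (hadj : ∀ W : Finset (D → ℝ), (∃ α : ℝ, 0 < α ∧ IsRegBand T x α W) → B ⊂ W → B' ⊆ W)
    (r : ℝ)
    (hr : IsLeast {s : ℝ | ∃ O : Finset (D → ℝ), O ⊆ T ∧ x ∈ O ∧ O.card = k ∧ s = score1 O} r) :
    score1 B' ≤ (1 + Real.sqrt (T.card : ℝ)) * r := by
  obtain ⟨αB, hαB, hBband⟩ := hB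
  obtain ⟨O, hOT, hxO, hOk, hOr⟩ := hr.1
  have hxB : x ∈ B := hBband.2.1
  have hxB' : x ∈ B' := hB'.choose_spec.2.2.1
  have hB'ne : B'.Nonempty := ⟨x, hxB'⟩
  have hTne : T.Nonempty := ⟨x, hx⟩
  set s := Real.sqrt (T.card : ℝ) with hs
  have hn1 : (1 : ℝ) ≤ (T.card : ℝ) := by exact_mod_cast Finset.card_pos.mpr hTne
  have hs1 : 1 ≤ s := by
    have h := Real.sqrt_le_sqrt hn1
    rwa [Real.sqrt_one] at h
  have hs0 : (0 : ℝ) < s := lt_of_lt_of_le one_pos hs1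
  have hss : s * s = (T.card : ℝ) := Real.mul_self_sqrt (by linarith)
  have hk1r : (1 : ℝ) ≤ (k : ℝ) := by exact_mod_cast hk1
  -- key inequality from B being a band at αB, compared with O
  have h1 := hBband.2.2.1 O hOT hxO
  simp only [reg] at h1
  rw [hOk, ← hOr] at h1
  have hSB : 0 ≤ score1 B := score1_nonneg ⟨x, hxB⟩
  have hkey1 : score1 B + αB * s ≤ r := by
    nlinarith [mul_nonneg hαB.le (show (0 : ℝ) ≤ (k : ℝ) - (B.card : ℝ) - s by linarith)]
  have hrpos : 0 < r := by nlinarith [mul_pos hαB hs0]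
  rcases eq_or_lt_of_le hkn with hkeq | hklt
  · -- k = |T| : then O = T and B' ⊆ T = O
    have hOT' : O = T := Finset.eq_of_subset_of_card_le hOT (by rw [hOk, hkeq])
    have h2 : score1 B' ≤ r := by
      rw [hOr]
      exact score1_mono hB'ne (hOT' ▸ hB'.choose_spec.2.1)
    nlinarith [mul_pos hs0 hrpos]
  · -- k < |T|
    have hdpos : 0 < (T.card : ℝ) - (k : ℝ) := by
      have : (k : ℝ) < (T.card : ℝ) := by exact_mod_cast hklt
      linarith
    set α₀ : ℝ := s * r / ((T.card : ℝ) - (k : ℝ)) with hα₀def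
    have hα₀pos : 0 < α₀ := div_pos (mul_pos hs0 hrpos) hdpos
    have haux : αB * s ≤ r := by linarith
    have hαB_lt : αB < α₀ := by
      rw [hα₀def, lt_div_iff₀ hdpos]
      nlinarith [mul_pos hαB hs0, mul_lt_mul_of_pos_left hdpos hαB]
    obtain ⟨W, hWband⟩ := band_exists T x hx α₀
    have hBW : B ⊆ W := band_chain hαB_lt hBband hWband
    -- r < α₀ * s
    have h8 : r < α₀ * s := by
      rw [hα₀def, div_mul_eq_mul_div, lt_div_iff₀ hdpos]
      nlinarith
    have h9 : α₀ * s ≤ α₀ * ((k : ℝ) - (B.card : ℝ)) :=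
      mul_le_mul_of_nonneg_left (by linarith) hα₀pos.le
    have hOB : reg α₀ O < reg α₀ B := by
      simp only [reg]
      rw [hOk, ← hOr]
      nlinarith
    have hWne : W ≠ B := by
      intro h
      have hh := hWband.2.2.1 O hOT hxO
      rw [h] at hh
      linarith
    have hBWs : B ⊂ W := lt_of_le_of_ne hBW (fun h => hWne h.symm)
    have hB'W : B' ⊆ W := hadj W ⟨α₀, hα₀pos, hWband⟩ hBWs
    have h10 : score1 B' ≤ score1 W := score1_mono hB'ne hB'W
    have h11 := hWband.2.2.1 O hOT hxO
    simp only [reg] at h11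
    rw [hOk, ← hOr] at h11
    have hWcard : (W.card : ℝ) ≤ (T.card : ℝ) := by
      exact_mod_cast Finset.card_le_card hWband.1
    have h12 : α₀ * ((T.card : ℝ) - (k : ℝ)) = s * r := by
      rw [hα₀def]
      field_simp
    have h13 : α₀ * ((W.card : ℝ) - (k : ℝ)) ≤ α₀ * ((T.card : ℝ) - (k : ℝ)) :=
      mul_le_mul_of_nonneg_left (by linarith) hα₀pos.le
    linarith
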